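/- Proposition 8.1, even part (Model 4 values along the superurban renewal families with even third coordinate): For every N ∈ ℤ, the following hold in F: Z₄(0,0,2N) = x₆ · D₄^{N(N−1)} E₄^{N²}; Z₄(−1,1,2N) = x₁ · D₄^{N(N−1)} E₄^{N²}; Z₄(0,−1,2N) = x₂ · D₄^{N(N−1)} E₄^{N²}; and Z₄(1,0,2N) = x₃ · D₄^{N(N−1)} E₄^{N²}. (Under the projection φ of Section 8, these are the values of the hexahedron-recurrence solutions φ(A(0,0,2N+1)), φ(A(1/2,1/2,2N)), φ(A(0,1/2,2N+1/2)), φ(A(1/2,0,2N+1/2)) of Kenyon–Pemantle.) -/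
import Mathlib


noncomputable section

open MvPolynomial

abbrev F : Type := FractionRing (MvPolynomial (Fin 6) ℚ)

/-- The images of the six indeterminates in the field `F = ℚ(x₁,…,x₆)`. -/
def xv (t : Fin 6) : F := algebraMap (MvPolynomial (Fin 6) ℚ) F (X t)

def x1 : F := xv 0
def x2 : F := xv 1
def x3 : F := xv 2
def x4 : F := xv 3
def x5 : F := xv 4
def x6 : F := xv 5

/-- Chooses among six field elements according to the residue of `2(i-j)+3k` mod 6:
residues 5,2,4,1,3,0 select the 1st,…,6th element respectively. -/
def pick (v1 v2 v3 v4 v5 v6 : F) (i j k : ℤ) : F :=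
  if (2*(i-j)+3*k) % 6 = 5 then v1
  else if (2*(i-j)+3*k) % 6 = 2 then v2
  else if (2*(i-j)+3*k) % 6 = 4 then v3
  else if (2*(i-j)+3*k) % 6 = 1 then v4
  else if (2*(i-j)+3*k) % 6 = 3 then v5
  else v6

/-- α(i,j,k) = ⌊(P+i+2j)/3⌋ with P = i²+ij+j²+1. -/
def expA (i j : ℤ) : ℤ := Int.fdiv ((i^2+i*j+j^2+1) + i + 2*j) 3
/-- β(i,j,k) = ⌊(P+2i+j)/3⌋. -/
def expB (i j : ℤ) : ℤ := Int.fdiv ((i^2+i*j+j^2+1) + 2*i + j) 3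
/-- γ(i,j,k) = ⌊P/3⌋. -/
def expC (i j : ℤ) : ℤ := Int.fdiv (i^2+i*j+j^2+1) 3
/-- δ(i,j,k) = ⌊(k−1)²/4⌋. -/
def expD (k : ℤ) : ℤ := Int.fdiv ((k-1)^2) 4
/-- ε(i,j,k) = ⌊k²/4⌋. -/
def expE (k : ℤ) : ℤ := Int.fdiv (k^2) 4

def Y1'' : F := (x6^4 + x1*x2*x3*x6 + 2*x4*x5*x6^2 + x4^2*x5^2) / (x1*x3*x4)
def Y3'' : F := (x4*x5 + x6^2) / x3
def Y4'' : F := (x1*x2*x3 + x4*x5*x6 + x6^3) / (x3*x4)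

def A4 : F := x1 / x2
def B4 : F := x3 / x1
def C4 : F := (x6^6 + 2*x1*x2*x3*x6^3 + x1^2*x2^2*x3^2 + 3*x4*x5*x6^4
    + 2*x1*x2*x3*x4*x5*x6 + 3*x4^2*x5^2*x6^2 + x4^3*x5^3) / (x1*x3^2*x4*x5*x6)
def D4 : F := x4 / x5
def E4 : F := (x6^6 + 2*x1*x2*x3*x6^3 + x1^2*x2^2*x3^2 + 3*x4*x5*x6^4
    + 3*x1*x2*x3*x4*x5*x6 + 3*x4^2*x5^2*x6^2 + x4^3*x5^3) / (x1*x2*x3*x4^2*x6)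

/-- The Model 4 closed formula Z₄(i,j,k) of Theorem 3.4. -/
def Z4 (i j k : ℤ) : F :=
  pick Y1'' x2 Y3'' Y4'' x5 x6 i j k *
    A4 ^ expA i j * B4 ^ expB i j * C4 ^ expC i j * D4 ^ expD k * E4 ^ expE k



lemma xv_ne (t : Fin 6) : xv t ≠ 0 := by
  have : (X t : MvPolynomial (Fin 6) ℚ) ≠ 0 := X_ne_zero t
  simpa [xv] using
    (map_ne_zero_iff _ (IsFractionRing.injective (MvPolynomial (Fin 6) ℚ) F)).mpr this

lemma hx1 : x1 ≠ 0 := xv_ne 0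
lemma hx2 : x2 ≠ 0 := xv_ne 1

lemma fdiv_aux (m : ℤ) : Int.fdiv (4*m+1) 4 = m := by
  rw [Int.fdiv_eq_ediv_of_nonneg _ (by norm_num)]
  omega

lemma expD_even (N : ℤ) : expD (2*N) = N*(N-1) := by
  have : (2*N-1)^2 = 4*(N*(N-1))+1 := by ring
  rw [expD, this, fdiv_aux]

lemma expE_even (N : ℤ) : expE (2*N) = N^2 := by
  have : (2*N)^2 = (N^2) * 4 := by ring
  rw [expE, this, Int.mul_fdiv_cancel _ (by norm_num)]


/-- Proposition 8.1, even part: Model 4 values along the superurban renewal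
families with even third coordinate. -/
theorem model4_superurban_even (N : ℤ) :
    Z4 0 0 (2*N) = x6 * D4 ^ (N*(N-1)) * E4 ^ (N^2) ∧
    Z4 (-1) 1 (2*N) = x1 * D4 ^ (N*(N-1)) * E4 ^ (N^2) ∧
    Z4 0 (-1) (2*N) = x2 * D4 ^ (N*(N-1)) * E4 ^ (N^2) ∧
    Z4 1 0 (2*N) = x3 * D4 ^ (N*(N-1)) * E4 ^ (N^2) := by
  have f1 : Int.fdiv 1 3 = 0 := by decide
  have f2 : Int.fdiv 2 3 = 0 := by decide
  have f3 : Int.fdiv 3 3 = 1 := by decide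
  have f4 : Int.fdiv 4 3 = 1 := by decide
  refine ⟨?_, ?_, ?_, ?_⟩ <;>
      simp only [Z4, pick, expA, expB, expC, expD_even, expE_even] <;>
      norm_num [f1, f2, f3, f4]
  · rw [if_neg (by omega), if_neg (by omega), if_neg (by omega), if_neg (by omega),
      if_neg (by omega)]
  · rw [if_neg (by omega), if_pos (by omega), A4]
    field_simp [hx1, hx2]
    try ring
  · rw [if_neg (by omega), if_pos (by omega)]
  · rw [if_neg (by omega), if_pos (by omega), A4, B4]
    field_simp [hx1, hx2]
    try ring
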